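/- arXiv:0710.1027 — 3 statements merged into one kernel-verified Lean document; each statement's English description precedes it below -/
import Mathlib

section
/- The quaternion algebra (−3, 2)_ℚ (generated by i, j with i² = −3, j² = 2, ji = −ij) is a division algebra over ℚ. -/
open Quaternion

lemma mul_den_eq_num' (q : ℚ) : q * (q.den : ℚ) = (q.num : ℚ) := by
  have hden : ((q.den : ℚ)) ≠ 0 := by exact_mod_cast q.den_ne_zero
  calc q * q.den = ((q.num : ℚ)/q.den) * q.den := by rw [Rat.num_div_den]
    _ = q.num := div_mul_cancel₀ _ hden

lemma descent_int : ∀ n : ℕ, ∀ a b c d : ℤ,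
    a.natAbs + b.natAbs + c.natAbs + d.natAbs ≤ n →
    a^2 + 3*b^2 = 2*c^2 + 6*d^2 → a = 0 ∧ b = 0 ∧ c = 0 ∧ d = 0 := by
  intro n
  induction n using Nat.strong_induction_on with
  | _ n ih =>
    intro a b c d hle heq
    rcases Nat.eq_zero_or_pos n with hn | hn
    · subst hn; omega
    have key3 : ∀ x y : ZMod 3, x^2 = 2*y^2 → x = 0 ∧ y = 0 := by decide
    have h1 : ((a : ZMod 3))^2 = 2*((c : ZMod 3))^2 := by
      have : ((a^2 + 3*b^2 : ℤ) : ZMod 3) = ((2*c^2 + 6*d^2 : ℤ) : ZMod 3) := by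
        exact_mod_cast congrArg _ heq
      push_cast at this
      have h3 : (3 : ZMod 3) = 0 := by decide
      have h6 : (6 : ZMod 3) = 0 := by decide
      rw [h3, h6] at this; linear_combination this
    obtain ⟨ha0, hc0⟩ := key3 _ _ h1
    obtain ⟨a', rfl⟩ : (3:ℤ) ∣ a := (ZMod.intCast_zmod_eq_zero_iff_dvd a 3).mp ha0
    obtain ⟨c', rfl⟩ : (3:ℤ) ∣ c := (ZMod.intCast_zmod_eq_zero_iff_dvd c 3).mp hc0
    have h9 : 9*a'^2 + 3*b^2 = 18*c'^2 + 6*d^2 := by linear_combination heq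
    have heq2 : 3*a'^2 + b^2 = 6*c'^2 + 2*d^2 := by linarith
    have h2 : ((b : ZMod 3))^2 = 2*((d : ZMod 3))^2 := by
      have : ((3*a'^2 + b^2 : ℤ) : ZMod 3) = ((6*c'^2 + 2*d^2 : ℤ) : ZMod 3) := by
        exact_mod_cast congrArg _ heq2
      push_cast at this
      have h3 : (3 : ZMod 3) = 0 := by decide
      have h6 : (6 : ZMod 3) = 0 := by decide
      rw [h3, h6] at this; linear_combination this
    obtain ⟨hb0, hd0⟩ := key3 _ _ h2
    obtain ⟨b', rfl⟩ : (3:ℤ) ∣ b := (ZMod.intCast_zmod_eq_zero_iff_dvd b 3).mp hb0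
    obtain ⟨d', rfl⟩ : (3:ℤ) ∣ d := (ZMod.intCast_zmod_eq_zero_iff_dvd d 3).mp hd0
    have h9' : 9*a'^2 + 27*b'^2 = 18*c'^2 + 54*d'^2 := by linear_combination heq
    have heq3 : a'^2 + 3*b'^2 = 2*c'^2 + 6*d'^2 := by linarith
    have hm : (3*a').natAbs = 3 * a'.natAbs := by simp [Int.natAbs_mul]
    have hm2 : (3*b').natAbs = 3 * b'.natAbs := by simp [Int.natAbs_mul]
    have hm3 : (3*c').natAbs = 3 * c'.natAbs := by simp [Int.natAbs_mul]
    have hm4 : (3*d').natAbs = 3 * d'.natAbs := by simp [Int.natAbs_mul]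
    rcases Nat.eq_zero_or_pos (a'.natAbs + b'.natAbs + c'.natAbs + d'.natAbs) with hz | hz
    · have ha' : a' = 0 := Int.natAbs_eq_zero.mp (by omega)
      have hb' : b' = 0 := Int.natAbs_eq_zero.mp (by omega)
      have hc' : c' = 0 := Int.natAbs_eq_zero.mp (by omega)
      have hd' : d' = 0 := Int.natAbs_eq_zero.mp (by omega)
      subst ha'; subst hb'; subst hc'; subst hd'; norm_num
    · have hlt : a'.natAbs + b'.natAbs + c'.natAbs + d'.natAbs < n := by omega
      obtain ⟨h1,h2,h3,h4⟩ := ih _ hlt a' b' c' d' le_rfl heq3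
      subst h1; subst h2; subst h3; subst h4
      norm_num

lemma descent_rat (a b c d : ℚ) (h : a^2 + 3*b^2 = 2*c^2 + 6*d^2) :
    a = 0 ∧ b = 0 ∧ c = 0 ∧ d = 0 := by
  have hNne : ((a.den : ℚ)) * b.den * c.den * d.den ≠ 0 := by
    have := a.den_ne_zero; have := b.den_ne_zero; have := c.den_ne_zero
    have := d.den_ne_zero
    positivity
  set A : ℤ := a.num * (b.den * c.den * d.den) with hA
  set B : ℤ := b.num * (a.den * c.den * d.den) with hB
  set C : ℤ := c.num * (a.den * b.den * d.den) with hC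
  set D : ℤ := d.num * (a.den * b.den * c.den) with hD
  have hAa : (A : ℚ) = a * ((a.den : ℚ) * b.den * c.den * d.den) := by
    rw [hA]; push_cast
    rw [show a * ((a.den : ℚ) * b.den * c.den * d.den)
        = (a * a.den) * ((b.den : ℚ) * c.den * d.den) by ring, mul_den_eq_num' a]
  have hBb : (B : ℚ) = b * ((a.den : ℚ) * b.den * c.den * d.den) := by
    rw [hB]; push_cast
    rw [show b * ((a.den : ℚ) * b.den * c.den * d.den)
        = (b * b.den) * ((a.den : ℚ) * c.den * d.den) by ring, mul_den_eq_num' b]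
  have hCc : (C : ℚ) = c * ((a.den : ℚ) * b.den * c.den * d.den) := by
    rw [hC]; push_cast
    rw [show c * ((a.den : ℚ) * b.den * c.den * d.den)
        = (c * c.den) * ((a.den : ℚ) * b.den * d.den) by ring, mul_den_eq_num' c]
  have hDd : (D : ℚ) = d * ((a.den : ℚ) * b.den * c.den * d.den) := by
    rw [hD]; push_cast
    rw [show d * ((a.den : ℚ) * b.den * c.den * d.den)
        = (d * d.den) * ((a.den : ℚ) * b.den * c.den) by ring, mul_den_eq_num' d]
  have hint : (A:ℚ)^2 + 3*(B:ℚ)^2 = 2*(C:ℚ)^2 + 6*(D:ℚ)^2 := by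
    rw [hAa, hBb, hCc, hDd]
    linear_combination ((a.den:ℚ) * b.den * c.den * d.den)^2 * h
  have hintZ : A^2 + 3*B^2 = 2*C^2 + 6*D^2 := by exact_mod_cast hint
  obtain ⟨h1, h2, h3, h4⟩ := descent_int
    (A.natAbs + B.natAbs + C.natAbs + D.natAbs) A B C D le_rfl hintZ
  have extract : ∀ (X : ℤ) (x : ℚ), (X:ℚ) = x * ((a.den : ℚ) * b.den * c.den * d.den) → X = 0 → x = 0 := by
    intro X x hX hX0
    rw [hX0] at hX; push_cast at hX
    exact (mul_eq_zero.mp hX.symm).resolve_right hNne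
  exact ⟨extract A a hAa h1, extract B b hBb h2, extract C c hCc h3, extract D d hDd h4⟩

/-- The quaternion algebra `(-3, 2)_ℚ` (with `i² = -3`, `j² = 2`, `ji = -ij`)
is a division algebra over `ℚ`: every nonzero element is invertible. -/
theorem stmt_4 : ∀ x : ℍ[ℚ, -3, 2], x ≠ 0 → IsUnit x := by
  intro x hx
  set r : ℚ := (x * star x).re with hr
  have hxr : x * star x = (r : ℍ[ℚ,-3,2]) := QuaternionAlgebra.mul_star_eq_coe x
  have hrval : r = x.re^2 + 3*x.imI^2 - 2*x.imJ^2 - 6*x.imK^2 := by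
    rw [hr, QuaternionAlgebra.re_mul]
    simp only [QuaternionAlgebra.re_star, QuaternionAlgebra.imI_star,
      QuaternionAlgebra.imJ_star, QuaternionAlgebra.imK_star]
    ring
  have hrne : r ≠ 0 := by
    intro h0
    have heq : x.re^2 + 3*x.imI^2 = 2*x.imJ^2 + 6*x.imK^2 := by
      rw [h0] at hrval; linarith
    obtain ⟨h1, h2, h3, h4⟩ := descent_rat _ _ _ _ heq
    exact hx (QuaternionAlgebra.ext h1 h2 h3 h4)
  refine isUnit_iff_exists.mpr ⟨r⁻¹ • star x, ?_, ?_⟩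
  · rw [mul_smul_comm, hxr, QuaternionAlgebra.smul_coe, inv_mul_cancel₀ hrne,
      QuaternionAlgebra.coe_one]
  · rw [smul_mul_assoc, star_comm_self', hxr, QuaternionAlgebra.smul_coe,
      inv_mul_cancel₀ hrne, QuaternionAlgebra.coe_one]
end

section
/- Let p be a prime, q a prime with v_p(q−1) = 2, and r a prime with r ≡ 1 + p² (mod p³) and with r congruent modulo q² to k + q, where k has multiplicative order p² modulo q². Then v_p(r − 1) = 2, v_q(r^p − 1) = 0, and v_q(r^{p²} − 1) = 1. -/
private lemma aux_binom (k q : ℤ) : ∀ n : ℕ,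
    (k + q) ^ (n + 1) ≡ k ^ (n + 1) + (n + 1) * k ^ n * q [ZMOD q ^ 2]
  | 0 => by simp [Int.ModEq.refl]
  | n + 1 => by
    have ih := aux_binom k q n
    calc (k + q) ^ (n + 2) = (k + q) ^ (n + 1) * (k + q) := by ring
    _ ≡ (k ^ (n + 1) + (n + 1) * k ^ n * q) * (k + q) [ZMOD q ^ 2] := ih.mul_right _
    _ ≡ k ^ (n + 2) + (n + 2) * k ^ (n + 1) * q [ZMOD q ^ 2] := by
        symm
        rw [Int.modEq_iff_dvd]
        exact ⟨(n + 1) * k ^ n, by ring⟩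

private lemma aux_val (p n v : ℕ) [Fact p.Prime] (h1 : p ^ v ∣ n) (h2 : ¬ p ^ (v + 1) ∣ n)
    (hn : n ≠ 0) : padicValNat p n = v := by
  have a := (padicValNat_dvd_iff_le (p := p) hn).mp h1
  have b := (padicValNat_dvd_iff_le (p := p) hn).not.mp h2
  omega

/-- Let `p` be a prime, `q` a prime with `v_p(q-1) = 2`, and `r` a prime with
`r ≡ 1 + p² (mod p³)` and `r ≡ k + q (mod q²)` where `k` has multiplicative order
`p²` modulo `q²`. Then `v_p(r-1) = 2`, `v_q(r^p - 1) = 0` and `v_q(r^{p²} - 1) = 1`. -/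
theorem stmt_7 (p q r k : ℕ) (hp : p.Prime) (hq : q.Prime) (hr : r.Prime)
    (hval : padicValNat p (q - 1) = 2)
    (hrp : r ≡ 1 + p ^ 2 [MOD p ^ 3])
    (hk : Nat.Coprime k q) (hord : orderOf (k : ZMod (q ^ 2)) = p ^ 2)
    (hrq : r ≡ k + q [MOD q ^ 2]) :
    padicValNat p (r - 1) = 2 ∧
    padicValNat q (r ^ p - 1) = 0 ∧
    padicValNat q (r ^ (p ^ 2) - 1) = 1 := by
  have hp2 : 2 ≤ p := hp.two_le
  have hq2 : 2 ≤ q := hq.two_le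
  have hr2 : 2 ≤ r := hr.two_le
  haveI : Fact p.Prime := ⟨hp⟩
  haveI : Fact q.Prime := ⟨hq⟩
  -- p ≠ q
  have hpq : p ≠ q := by
    intro h; subst h
    have hd : p ^ 2 ∣ p - 1 := by
      have := pow_padicValNat_dvd (p := p) (n := p - 1)
      rwa [hval] at this
    have h2 : p ^ 2 ≤ p := (Nat.le_of_dvd (by omega) hd).trans (Nat.sub_le p 1)
    rw [pow_two] at h2
    nlinarith [Nat.mul_le_mul hp2 (le_refl p)]
  -- Part 1
  have hP1 : padicValNat p (r - 1) = 2 := by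
    have hd : ((p : ℤ) ^ 3) ∣ ((1 + p ^ 2 : ℕ) : ℤ) - (r : ℤ) := by
      have := (Nat.modEq_iff_dvd (n := p ^ 3)).mp hrp
      exact_mod_cast this
    have hd3 : ((p : ℤ) ^ 3) ∣ ((r : ℤ) - 1) - (p : ℤ) ^ 2 := by
      have : ((r : ℤ) - 1) - (p : ℤ) ^ 2 = -(((1 + p ^ 2 : ℕ) : ℤ) - r) := by push_cast; ring
      rw [this]; exact hd.neg_right
    have hdvd2 : (p : ℤ) ^ 2 ∣ (r : ℤ) - 1 := by
      have h23 : (p : ℤ) ^ 2 ∣ (p : ℤ) ^ 3 := pow_dvd_pow _ (by norm_num)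
      have := (h23.trans hd3).add (dvd_refl ((p : ℤ) ^ 2))
      simpa using this
    have hndvd3 : ¬ (p : ℤ) ^ 3 ∣ (r : ℤ) - 1 := by
      intro h
      have : (p : ℤ) ^ 3 ∣ (p : ℤ) ^ 2 := by
        have := h.sub hd3; simpa using this
      have := Int.le_of_dvd (by positivity) this
      have : (p : ℤ) ^ 3 ≤ (p : ℤ) ^ 2 := this
      have hplt : (p : ℤ) ^ 2 < (p : ℤ) ^ 3 := by
        apply pow_lt_pow_right₀ (by exact_mod_cast hp.one_lt) (by norm_num)
      omega
    have hcast : ((r - 1 : ℕ) : ℤ) = (r : ℤ) - 1 := by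
      have : 1 ≤ r := by omega
      push_cast [this]; ring
    apply aux_val p (r - 1) 2
    · have : (p : ℤ) ^ 2 ∣ ((r - 1 : ℕ) : ℤ) := by rw [hcast]; exact hdvd2
      exact_mod_cast this
    · intro h
      apply hndvd3
      rw [← hcast]; exact_mod_cast h
    · omega
  -- k is coprime facts
  have hk1 : 1 ≤ k := by
    rcases Nat.eq_zero_or_pos k with h | h
    · exfalso; subst h; simp [Nat.Coprime] at hk; omega
    · exact h
  -- key: q² ∣ k^{p²} - 1 over ℤ
  have hkpow : ((k : ZMod (q ^ 2))) ^ (p ^ 2) = 1 := by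
    rw [← hord]; exact pow_orderOf_eq_one _
  have hkmod : k ^ (p ^ 2) ≡ 1 [MOD q ^ 2] := by
    rw [← ZMod.natCast_eq_natCast_iff]; push_cast; exact hkpow
  have hk2 : ((q : ℤ) ^ 2) ∣ (k : ℤ) ^ (p ^ 2) - 1 := by
    have := (Nat.modEq_iff_dvd (n := q ^ 2)).mp hkmod.symm
    exact_mod_cast this
  -- r ≡ k + q mod q²  over ℤ
  have hrqZ : ((q : ℤ) ^ 2) ∣ ((k : ℤ) + q) - r := by
    have := (Nat.modEq_iff_dvd (n := q ^ 2)).mp hrq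
    exact_mod_cast this
  -- Part 2
  have hP2 : padicValNat q (r ^ p - 1) = 0 := by
    apply padicValNat.eq_zero_of_not_dvd
    intro hdvd
    have hdZ : (q : ℤ) ∣ (r : ℤ) ^ p - 1 := by
      have h1 : 1 ≤ r ^ p := Nat.one_le_pow _ _ (by omega)
      have : ((r ^ p - 1 : ℕ) : ℤ) = (r : ℤ) ^ p - 1 := by push_cast [h1]; ring
      rw [← this]; exact_mod_cast hdvd
    have hqkr : (q : ℤ) ∣ (k : ℤ) - r := by
      have h1 : (q : ℤ) ∣ ((k : ℤ) + q) - r :=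
        (dvd_pow_self (q : ℤ) (two_ne_zero)).trans hrqZ
      have := h1.sub (dvd_refl (q : ℤ))
      simpa [sub_sub] using this
    have hqkp : (q : ℤ) ∣ (k : ℤ) ^ p - 1 := by
      have h1 : (q : ℤ) ∣ (k : ℤ) ^ p - (r : ℤ) ^ p :=
        hqkr.trans (sub_dvd_pow_sub_pow _ _ p)
      have := h1.add hdZ
      simpa using this
    -- lift to q²
    have hlift : ((q : ℤ)) ^ 2 ∣ ((k : ℤ) ^ p) ^ (q ^ 1) - 1 ^ (q ^ 1) :=
      dvd_sub_pow_of_dvd_sub (by simpa using hqkp) 1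
    have hlift' : ((q : ℤ) ^ 2) ∣ (k : ℤ) ^ (p * q) - 1 := by
      simpa [pow_mul] using hlift
    have hmod : k ^ (p * q) ≡ 1 [MOD q ^ 2] := by
      rw [Nat.ModEq.comm, Nat.modEq_iff_dvd]
      exact_mod_cast hlift'
    have hord2 : p ^ 2 ∣ p * q := by
      rw [← hord]
      apply orderOf_dvd_of_pow_eq_one
      have := (ZMod.natCast_eq_natCast_iff _ _ _).mpr hmod
      push_cast at this
      exact this
    have hpdq : p ∣ q := by
      have : p * p ∣ p * q := by rwa [← sq]
      exact (mul_dvd_mul_iff_left (by omega : p ≠ 0)).mp this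
    exact hpq ((Nat.prime_dvd_prime_iff_eq hp hq).mp hpdq)
  -- Part 3
  have hP3 : padicValNat q (r ^ (p ^ 2) - 1) = 1 := by
    have hp21 : p ^ 2 - 1 + 1 = p ^ 2 := Nat.succ_pred_eq_of_pos (pow_pos (by omega) 2)
    have hbin := aux_binom (k : ℤ) (q : ℤ) (p ^ 2 - 1)
    rw [hp21] at hbin
    have hrmod : (r : ℤ) ≡ (k : ℤ) + q [ZMOD (q : ℤ) ^ 2] := by
      rw [Int.modEq_iff_dvd]; exact hrqZ
    have hmain : ((q : ℤ) ^ 2) ∣ ((r : ℤ) ^ (p ^ 2) - 1) -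
        ((p ^ 2 - 1 + 1 : ℕ) : ℤ) * (k : ℤ) ^ (p ^ 2 - 1) * q := by
      have h1 : (r : ℤ) ^ (p ^ 2) ≡ (k : ℤ) ^ (p ^ 2) +
          ((p ^ 2 - 1 + 1 : ℕ) : ℤ) * (k : ℤ) ^ (p ^ 2 - 1) * q [ZMOD (q : ℤ) ^ 2] := by
        calc (r : ℤ) ^ (p ^ 2) ≡ ((k : ℤ) + q) ^ (p ^ 2) [ZMOD (q : ℤ) ^ 2] := hrmod.pow _
        _ ≡ _ [ZMOD (q : ℤ) ^ 2] := by rw [← hp21] at *; exact hbin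
      have h2 := h1.symm.dvd
      -- h2 : q² ∣ r^{p²} - (k^{p²} + c)
      have h3 := h2.add hk2
      have : (r : ℤ) ^ p ^ 2 - ((k : ℤ) ^ p ^ 2 +
          ((p ^ 2 - 1 + 1 : ℕ) : ℤ) * (k : ℤ) ^ (p ^ 2 - 1) * q) + ((k : ℤ) ^ (p ^ 2) - 1)
          = ((r : ℤ) ^ (p ^ 2) - 1) - ((p ^ 2 - 1 + 1 : ℕ) : ℤ) * (k : ℤ) ^ (p ^ 2 - 1) * q := by
        ring
      rwa [this] at h3
    set E : ℤ := ((p ^ 2 - 1 + 1 : ℕ) : ℤ) * (k : ℤ) ^ (p ^ 2 - 1) * q with hE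
    have hone : 1 ≤ r ^ (p ^ 2) := Nat.one_le_pow _ _ (by omega)
    have hcast : ((r ^ (p ^ 2) - 1 : ℕ) : ℤ) = (r : ℤ) ^ (p ^ 2) - 1 := by
      push_cast [hone]; ring
    have hq1dvd : (q : ℤ) ∣ (r : ℤ) ^ (p ^ 2) - 1 := by
      have h1 : (q : ℤ) ∣ E := dvd_mul_left _ _
      have h2 : (q : ℤ) ∣ ((r : ℤ) ^ (p ^ 2) - 1) - E :=
        (dvd_pow_self (q : ℤ) two_ne_zero).trans hmain
      have := h2.add h1; simpa using this
    have hq2ndvd : ¬ (q : ℤ) ^ 2 ∣ (r : ℤ) ^ (p ^ 2) - 1 := by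
      intro h
      have hE2 : (q : ℤ) ^ 2 ∣ E := by
        have := h.sub hmain; simpa using this
      have hq0 : (q : ℤ) ≠ 0 := by exact_mod_cast (by omega : q ≠ 0)
      have h2 : (q : ℤ) * q ∣ (((p ^ 2 - 1 + 1 : ℕ) : ℤ) * (k : ℤ) ^ (p ^ 2 - 1)) * q := by
        rw [← sq]; exact hE2
      have : (q : ℤ) ∣ ((p ^ 2 - 1 + 1 : ℕ) : ℤ) * (k : ℤ) ^ (p ^ 2 - 1) :=
        (mul_dvd_mul_iff_right hq0).mp h2
      have hnat : q ∣ (p ^ 2 - 1 + 1) * k ^ (p ^ 2 - 1) := by exact_mod_cast this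
      rcases (Nat.Prime.dvd_mul hq).mp hnat with h | h
      · rw [hp21] at h
        have := hq.dvd_of_dvd_pow h
        exact hpq ((Nat.prime_dvd_prime_iff_eq hq hp).mp this).symm
      · have := hq.dvd_of_dvd_pow h
        have : q ∣ Nat.gcd k q := Nat.dvd_gcd this dvd_rfl
        rw [hk] at this
        exact absurd (Nat.le_of_dvd Nat.one_pos this) (by omega)
    apply aux_val q _ 1
    · have : (q : ℤ) ∣ ((r ^ (p ^ 2) - 1 : ℕ) : ℤ) := by rw [hcast]; exact hq1dvd
      exact_mod_cast (by simpa using this : (q : ℤ) ^ 1 ∣ ((r ^ (p ^ 2) - 1 : ℕ) : ℤ))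
    · intro h
      apply hq2ndvd
      rw [← hcast]
      exact_mod_cast h
    · have : 2 ≤ r ^ (p ^ 2) := by
        calc 2 ≤ r := hr2
        _ = r ^ 1 := (pow_one r).symm
        _ ≤ r ^ (p ^ 2) := Nat.pow_le_pow_right (by omega) (Nat.one_le_pow 2 p (by omega))
      omega
  exact ⟨hP1, hP2, hP3⟩
end

section
/- Let G be a finite abelian group, D ≤ G a subgroup, and C ≤ D a subgroup of index at most 2 in D with G/C a 2-group. Suppose G/C = ⟨ρC⟩ × ⟨σC⟩ with ρ ∈ D. Then there exist a subgroup B of C and an element ρ ∈ D such that D = B × ⟨ρ⟩ and C = B × ⟨ρ²⟩. -/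
open Subgroup

private lemma two_grp_sq {Q : Type*} [Group Q] (h : Nat.card Q = 2) (a : Q) : a ^ 2 = 1 := by
  rw [← h]; exact pow_card_eq_one'

private lemma two_grp_unique {Q : Type*} [Group Q] (h : Nat.card Q = 2) {a b : Q}
    (ha : a ≠ 1) (hb : b ≠ 1) : a = b := by
  classical
  have hfin : Finite Q := Nat.finite_of_card_ne_zero (by omega)
  have : Fintype Q := Fintype.ofFinite Q
  by_contra hne
  have h3 : ({1, a, b} : Finset Q).card = 3 := by
    rw [Finset.card_insert_of_notMem (by simp [Ne.symm ha, Ne.symm hb]),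
      Finset.card_insert_of_notMem (by simp [hne]), Finset.card_singleton]
  have hle := Finset.card_le_univ ({1, a, b} : Finset Q)
  rw [h3] at hle
  rw [← Nat.card_eq_fintype_card, h] at hle
  omega

private lemma pi_core (ι : Type) [Fintype ι] (p n : ι → ℕ) (hp : ∀ i, (p i).Prime)
    (C : Subgroup (∀ i, Multiplicative (ZMod (p i ^ n i)))) (hC : C.index = 2) :
    ∃ B ≤ C, ∃ ρ' : ∀ i, Multiplicative (ZMod (p i ^ n i)),
      (B ⊔ zpowers ρ' = ⊤ ∧ B ⊓ zpowers ρ' = ⊥) ∧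
      (B ⊔ zpowers (ρ' ^ 2) = C ∧ B ⊓ zpowers (ρ' ^ 2) = ⊥) := by
  classical
  haveI : ∀ i, NeZero (p i ^ n i) := fun i => ⟨pow_ne_zero _ (hp i).pos.ne'⟩
  set P := ∀ i, Multiplicative (ZMod (p i ^ n i)) with hPdef
  let χ : P →* P ⧸ C := QuotientGroup.mk' C
  have hQcard : Nat.card (P ⧸ C) = 2 := hC
  have hker : ∀ v : P, χ v = 1 ↔ v ∈ C := fun v => QuotientGroup.eq_one_iff v
  let g : ∀ i, Multiplicative (ZMod (p i ^ n i)) := fun i => Multiplicative.ofAdd 1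
  have hgen : ∀ (i) (x : Multiplicative (ZMod (p i ^ n i))),
      x = g i ^ (Multiplicative.toAdd x).val := by
    intro i x
    have h1 : (((Multiplicative.toAdd x).val : ℕ) : ZMod (p i ^ n i)) = Multiplicative.toAdd x :=
      ZMod.natCast_rightInverse _
    calc x = Multiplicative.ofAdd (Multiplicative.toAdd x) := rfl
    _ = Multiplicative.ofAdd (((Multiplicative.toAdd x).val : ℕ) • (1 : ZMod (p i ^ n i))) := by
        rw [nsmul_eq_mul, mul_one, h1]
    _ = g i ^ (Multiplicative.toAdd x).val := by
        rw [ofAdd_nsmul]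
  have hgq : ∀ i, g i ^ (p i ^ n i) = 1 := by
    intro i
    have : ((p i ^ n i : ℕ) : ZMod (p i ^ n i)) = 0 := ZMod.natCast_self _
    calc g i ^ (p i ^ n i) = Multiplicative.ofAdd ((p i ^ n i : ℕ) • (1 : ZMod (p i ^ n i))) := by
          rw [ofAdd_nsmul]
    _ = 1 := by rw [nsmul_eq_mul, mul_one, this]; rfl
  let a : ι → P ⧸ C := fun i => χ (Pi.mulSingle i (g i))
  have hsingle : ∀ (i) (x : Multiplicative (ZMod (p i ^ n i))),
      χ (Pi.mulSingle i x) = a i ^ (Multiplicative.toAdd x).val := by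
    intro i x
    conv_lhs => rw [hgen i x]
    rw [Pi.mulSingle_pow, map_pow]
  set S : Finset ι := Finset.univ.filter (fun i => a i ≠ 1) with hSdef
  have haS : ∀ i ∈ S, a i ≠ 1 := fun i hi => (Finset.mem_filter.mp hi).2
  have haS' : ∀ i, i ∉ S → a i = 1 := by
    intro i hi
    by_contra h
    exact hi (Finset.mem_filter.mpr ⟨Finset.mem_univ i, h⟩)
  rcases S.eq_empty_or_nonempty with hS | hS
  · exfalso
    have hCtop : C = ⊤ := by
      rw [eq_top_iff]
      intro v _
      rw [← hker]
      have hv : v = ∏ i, Pi.mulSingle i (v i) := (Finset.univ_prod_mulSingle v).symm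
      rw [hv, map_prod]
      refine Finset.prod_eq_one fun i _ => ?_
      rw [hsingle, haS' i (by simp [hS]), one_pow]
    rw [hCtop, Subgroup.index_top] at hC
    omega
  obtain ⟨i₀, hi₀S, hmin⟩ := S.exists_min_image n hS
  have horda : ∀ i ∈ S, orderOf (a i) = 2 := fun i hi =>
    orderOf_eq_prime (two_grp_sq hQcard _) (haS i hi)
  have h2S : ∀ i ∈ S, p i = 2 ∧ 1 ≤ n i := by
    intro i hi
    have hpow : a i ^ (p i ^ n i) = 1 := by
      show χ (Pi.mulSingle i (g i)) ^ (p i ^ n i) = 1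
      rw [← map_pow, ← Pi.mulSingle_pow, hgq i]
      simp
    have hdvd2 : 2 ∣ p i ^ n i := by
      rw [← horda i hi]
      exact orderOf_dvd_of_pow_eq_one hpow
    have hn : 1 ≤ n i := by
      rcases Nat.eq_zero_or_pos (n i) with h0 | h0
      · rw [h0, pow_zero] at hdvd2; omega
      · exact h0
    have hp2 : p i = 2 :=
      ((Nat.prime_dvd_prime_iff_eq Nat.prime_two (hp i)).mp
        (Nat.Prime.dvd_of_dvd_pow Nat.prime_two hdvd2)).symm
    exact ⟨hp2, hn⟩
  have hdvd : ∀ i ∈ S, p i₀ ^ n i₀ ∣ p i ^ n i := by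
    intro i hi
    rw [(h2S i hi).1, (h2S i₀ hi₀S).1]
    exact pow_dvd_pow 2 (hmin i hi)
  let F : ∀ i, Multiplicative (ZMod (p i ^ n i)) →* Multiplicative (ZMod (p i₀ ^ n i₀)) :=
    fun i => if h : i ∈ S then
      AddMonoidHom.toMultiplicative ((ZMod.castHom (hdvd i h) (ZMod (p i₀ ^ n i₀))).toAddMonoidHom)
    else 1
  have hFg : ∀ i (hi : i ∈ S), F i (g i) = g i₀ := by
    intro i hi
    simp only [F, dif_pos hi]
    show Multiplicative.ofAdd ((ZMod.castHom (hdvd i hi) (ZMod (p i₀ ^ n i₀))) 1) = _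
    rw [map_one]
  let ψ : P →* Multiplicative (ZMod (p i₀ ^ n i₀)) :=
    MonoidHom.mk' (fun v => v i₀ * ∏ i ∈ S.erase i₀, F i (v i)) (by
      intro x y
      show (x * y) i₀ * ∏ i ∈ S.erase i₀, F i ((x * y) i) = _
      have h1 : ∀ i ∈ S.erase i₀, F i ((x * y) i) = F i (x i) * F i (y i) := by
        intro i _
        rw [Pi.mul_apply, map_mul]
      rw [Pi.mul_apply, Finset.prod_congr rfl h1, Finset.prod_mul_distrib, mul_mul_mul_comm])
  have hψapp : ∀ v : P, ψ v = v i₀ * ∏ i ∈ S.erase i₀, F i (v i) := fun v => rfl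
  have hψ_single : ∀ x, ψ (Pi.mulSingle i₀ x) = x := by
    intro x
    rw [hψapp, Pi.mulSingle_eq_same,
      Finset.prod_eq_one (fun i hi => by
        rw [Pi.mulSingle_eq_of_ne (Finset.ne_of_mem_erase hi), map_one]), mul_one]
  have hψ_single' : ∀ j, j ≠ i₀ → ∀ x, ψ (Pi.mulSingle j x) = if j ∈ S then F j x else 1 := by
    intro j hj x
    rw [hψapp, Pi.mulSingle_eq_of_ne (Ne.symm hj), one_mul]
    by_cases hjS : j ∈ S
    · rw [if_pos hjS]
      have hside : ∀ b ∈ S.erase i₀, b ≠ j → F b ((Pi.mulSingle j x : P) b) = 1 := by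
        intro b _ hbj
        rw [Pi.mulSingle_eq_of_ne hbj, map_one]
      rw [Finset.prod_eq_single_of_mem j (Finset.mem_erase.mpr ⟨hj, hjS⟩) hside,
        Pi.mulSingle_eq_same]
    · rw [if_neg hjS]
      refine Finset.prod_eq_one fun i hi => ?_
      have hij : i ≠ j := fun h => hjS (h ▸ (Finset.mem_of_mem_erase hi))
      rw [Pi.mulSingle_eq_of_ne hij, map_one]
  have hχψ : ∀ v, χ v = χ (Pi.mulSingle i₀ (ψ v)) := by
    have key : χ = χ.comp ((MonoidHom.mulSingle _ i₀).comp ψ) := by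
      refine MonoidHom.functions_ext _ _ _ fun j x => ?_
      simp only [MonoidHom.comp_apply, MonoidHom.mulSingle_apply]
      by_cases hj : j = i₀
      · subst hj
        rw [hψ_single]
      · rw [hψ_single' j hj]
        by_cases hjS : j ∈ S
        · rw [if_pos hjS]
          have hFx : F j x = g i₀ ^ (Multiplicative.toAdd x).val := by
            conv_lhs => rw [hgen j x]
            rw [map_pow, hFg j hjS]
          rw [hsingle j x, hFx, Pi.mulSingle_pow, map_pow,
            two_grp_unique hQcard (haS j hjS) (haS i₀ hi₀S)]
        · rw [if_neg hjS]
          rw [hsingle j x, haS' j hjS, one_pow]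
          simp
    intro v
    conv_lhs => rw [key]
    rfl
  set ρ' : P := Pi.mulSingle i₀ (g i₀) with hρ'def
  have hρψ : ψ ρ' = g i₀ := hψ_single _
  have hzpow_one : ∀ m : ℤ, g i₀ ^ m = 1 → ρ' ^ m = 1 := by
    intro m h
    rw [hρ'def, ← Pi.mulSingle_zpow, h]
    simp
  have hBmem : ∀ v : P, v ∈ ψ.ker ↔ ψ v = 1 := fun v => MonoidHom.mem_ker
  -- the complement B
  refine ⟨ψ.ker, ?_, ρ', ⟨?_, ?_⟩, ?_, ?_⟩
  · -- B ≤ C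
    intro v hv
    rw [hBmem] at hv
    rw [← hker, hχψ v, hv]
    simp
  · -- B ⊔ zpowers ρ' = ⊤
    rw [eq_top_iff]
    intro v _
    set k : ℕ := (Multiplicative.toAdd (ψ v)).val with hkdef
    have hψvk : ψ v = g i₀ ^ k := hgen i₀ (ψ v)
    have h1 : v * ρ' ^ (-(k : ℤ)) ∈ ψ.ker := by
      rw [hBmem, map_mul, map_zpow, hρψ, hψvk, ← zpow_natCast (g i₀) k, ← zpow_add]
      simp
    have h2 : v = (v * ρ' ^ (-(k : ℤ))) * ρ' ^ (k : ℤ) := by group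
    rw [h2]
    exact mul_mem (mem_sup_left h1) (mem_sup_right (zpow_mem (mem_zpowers ρ') _))
  · -- B ⊓ zpowers ρ' = ⊥
    rw [eq_bot_iff]
    intro x hx
    rw [Subgroup.mem_inf, Subgroup.mem_zpowers_iff] at hx
    obtain ⟨hxB, m, hm⟩ := hx
    rw [← hm] at hxB ⊢
    rw [hBmem, map_zpow, hρψ] at hxB
    rw [mem_bot]
    exact hzpow_one m hxB
  · -- B ⊔ zpowers (ρ' ^ 2) = C
    refine le_antisymm (sup_le ?_ ?_) ?_
    · intro v hv
      rw [hBmem] at hv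
      rw [← hker, hχψ v, hv]
      simp
    · rw [zpowers_le]
      rw [← hker, map_pow]
      exact two_grp_sq hQcard _
    · intro v hv
      have hχv : χ v = 1 := (hker v).mpr hv
      set k : ℕ := (Multiplicative.toAdd (ψ v)).val with hkdef
      have hψvk : ψ v = g i₀ ^ k := hgen i₀ (ψ v)
      have hak : a i₀ ^ k = 1 := by
        rw [hχψ v] at hχv
        rw [← hsingle i₀ (ψ v)]
        exact hχv
      have h2k : 2 ∣ k := by
        rw [← horda i₀ hi₀S]
        exact orderOf_dvd_of_pow_eq_one hak
      obtain ⟨l, hl⟩ := h2k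
      have h1 : v * ρ' ^ (-(k : ℤ)) ∈ ψ.ker := by
        rw [hBmem, map_mul, map_zpow, hρψ, hψvk, ← zpow_natCast (g i₀) k, ← zpow_add]
        simp
      have hkl : (k : ℤ) = 2 * (l : ℤ) := by omega
      have hpows : ρ' ^ (k : ℤ) = (ρ' ^ 2) ^ (l : ℤ) := by
        rw [← zpow_natCast ρ' 2, ← zpow_mul, hkl]
        norm_num
      have h2 : v = (v * ρ' ^ (-(k : ℤ))) * (ρ' ^ 2) ^ (l : ℤ) := by
        rw [← hpows]; group
      rw [h2]
      exact mul_mem (mem_sup_left h1) (mem_sup_right (zpow_mem (mem_zpowers _) _))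
  · -- B ⊓ zpowers (ρ' ^ 2) = ⊥
    rw [eq_bot_iff]
    intro x hx
    rw [Subgroup.mem_inf, Subgroup.mem_zpowers_iff] at hx
    obtain ⟨hxB, m, hm⟩ := hx
    rw [← hm] at hxB ⊢
    rw [hBmem, map_zpow, map_pow, hρψ] at hxB
    rw [mem_bot]
    have : (ρ' ^ 2) ^ m = ρ' ^ (2 * m) := by
      rw [← zpow_natCast ρ' 2, ← zpow_mul]
      norm_num
    rw [this]
    apply hzpow_one
    rw [← hxB, ← zpow_natCast (g i₀) 2, ← zpow_mul]
    norm_num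

private lemma core (A : Type*) [CommGroup A] [Finite A] (C : Subgroup A) (hC : C.index ≤ 2) :
    ∃ B ≤ C, ∃ ρ' : A,
      (B ⊔ zpowers ρ' = ⊤ ∧ B ⊓ zpowers ρ' = ⊥) ∧
      (B ⊔ zpowers (ρ' ^ 2) = C ∧ B ⊓ zpowers (ρ' ^ 2) = ⊥) := by
  by_cases htop : C = ⊤
  · subst htop
    exact ⟨⊤, le_rfl, 1, by simp [zpowers_one_eq_bot], by simp [zpowers_one_eq_bot, one_pow]⟩
  · have hidx2 : C.index = 2 := by
      have h0 : C.index ≠ 0 := Subgroup.index_ne_zero_of_finite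
      have h1 : C.index ≠ 1 := fun h => htop (Subgroup.index_eq_one.mp h)
      omega
    obtain ⟨ι, hι, p, hp, nn, ⟨e⟩⟩ := AddCommGroup.equiv_directSum_zmod_of_finite (Additive A)
    let E : A ≃* ((i : ι) → Multiplicative (ZMod (p i ^ nn i))) :=
      MulEquiv.toAdditive.symm <| e.trans <| (DirectSum.addEquivProd _).trans <|
        MulEquiv.toAdditiveRight <| MulEquiv.piMultiplicative _
    let f : ((i : ι) → Multiplicative (ZMod (p i ^ nn i))) →* A := E.symm.toMonoidHom
    have hfsurj : Function.Surjective f := E.symm.surjective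
    have hfinj : Function.Injective f := E.symm.injective
    set C' : Subgroup ((i : ι) → Multiplicative (ZMod (p i ^ nn i))) := C.comap f with hC'def
    have hC' : C'.index = 2 := by
      rw [hC'def, Subgroup.index_comap_of_surjective C hfsurj]
      exact hidx2
    obtain ⟨B', hB'C', ρ'', ⟨hs1, hi1⟩, hs2, hi2⟩ := pi_core ι p nn hp C' hC'
    have hmapC : C'.map f = C := Subgroup.map_comap_eq_self_of_surjective hfsurj C
    refine ⟨B'.map f, ?_, E.symm ρ'', ⟨?_, ?_⟩, ?_, ?_⟩
    · calc B'.map f ≤ C'.map f := Subgroup.map_mono hB'C'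
      _ = C := hmapC
    · have hz : zpowers (E.symm ρ'') = (zpowers ρ'').map f := (MonoidHom.map_zpowers f ρ'').symm
      rw [hz, ← Subgroup.map_sup, hs1, ← MonoidHom.range_eq_map]
      exact f.range_eq_top_of_surjective hfsurj
    · have hz : zpowers (E.symm ρ'') = (zpowers ρ'').map f := (MonoidHom.map_zpowers f ρ'').symm
      rw [hz, ← Subgroup.map_inf _ _ f hfinj, hi1, Subgroup.map_bot]
    · have hz : zpowers ((E.symm ρ'') ^ 2) = (zpowers (ρ'' ^ 2)).map f := by
        rw [MonoidHom.map_zpowers, map_pow]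
        rfl
      rw [hz, ← Subgroup.map_sup, hs2, hmapC]
    · have hz : zpowers ((E.symm ρ'') ^ 2) = (zpowers (ρ'' ^ 2)).map f := by
        rw [MonoidHom.map_zpowers, map_pow]
        rfl
      rw [hz, ← Subgroup.map_inf _ _ f hfinj, hi2, Subgroup.map_bot]


/-- Let `G` be a finite abelian group, `D ≤ G` and `C ≤ D` with `[D : C] ≤ 2`, with
`G/C` a `2`-group and `G/C = ⟨ρC⟩ × ⟨σC⟩` for some `ρ ∈ D`. Then there exist a
subgroup `B ≤ C` and an element `ρ' ∈ D` such that `D = B × ⟨ρ'⟩` and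
`C = B × ⟨ρ'²⟩` (internal direct products). -/
theorem stmt_9 (G : Type) [CommGroup G] [Fintype G] (D C : Subgroup G)
    (hCD : C ≤ D) (hidx : C.relIndex D ≤ 2)
    (h2 : IsPGroup 2 (G ⧸ C))
    (ρ σ : G) (hρD : ρ ∈ D)
    (hgen : zpowers ((ρ : G ⧸ C)) ⊔ zpowers ((σ : G ⧸ C)) = ⊤)
    (hdisj : zpowers ((ρ : G ⧸ C)) ⊓ zpowers ((σ : G ⧸ C)) = ⊥) :
    ∃ B : Subgroup G, B ≤ C ∧ ∃ ρ' ∈ D,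
      (B ⊔ zpowers ρ' = D ∧ B ⊓ zpowers ρ' = ⊥) ∧
      (B ⊔ zpowers (ρ' ^ 2) = C ∧ B ⊓ zpowers (ρ' ^ 2) = ⊥) := by
  obtain ⟨B', hB'C, ρ'', ⟨hs1, hi1⟩, hs2, hi2⟩ := core (↥D) (C.subgroupOf D) hidx
  have hmapC : (C.subgroupOf D).map D.subtype = C := by
    rw [Subgroup.subgroupOf_map_subtype, inf_eq_left.mpr hCD]
  have hcoe2 : ((ρ'' : G)) ^ 2 = ((ρ'' ^ 2 : ↥D) : G) := by norm_cast
  refine ⟨B'.map D.subtype, ?_, (ρ'' : G), ρ''.2, ⟨?_, ?_⟩, ?_, ?_⟩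
  · calc B'.map D.subtype ≤ (C.subgroupOf D).map D.subtype := Subgroup.map_mono hB'C
    _ = C := hmapC
  · have hz : zpowers ((ρ'' : G)) = (zpowers ρ'').map D.subtype :=
      (MonoidHom.map_zpowers D.subtype ρ'').symm
    rw [hz, ← Subgroup.map_sup, hs1, ← MonoidHom.range_eq_map, Subgroup.range_subtype]
  · have hz : zpowers ((ρ'' : G)) = (zpowers ρ'').map D.subtype :=
      (MonoidHom.map_zpowers D.subtype ρ'').symm
    rw [hz, ← Subgroup.map_inf _ _ D.subtype D.subtype_injective, hi1, Subgroup.map_bot]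
  · have hz : zpowers (((ρ'' ^ 2 : ↥D) : G)) = (zpowers (ρ'' ^ 2)).map D.subtype :=
      (MonoidHom.map_zpowers D.subtype (ρ'' ^ 2)).symm
    rw [hcoe2, hz, ← Subgroup.map_sup, hs2, hmapC]
  · have hz : zpowers (((ρ'' ^ 2 : ↥D) : G)) = (zpowers (ρ'' ^ 2)).map D.subtype :=
      (MonoidHom.map_zpowers D.subtype (ρ'' ^ 2)).symm
    rw [hcoe2, hz, ← Subgroup.map_inf _ _ D.subtype D.subtype_injective, hi2, Subgroup.map_bot]
end
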